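/- Let (M,p,φ) and (N,q,ψ) be triples of pointed metric spaces with real-valued Lipschitz functions that are ε-close at scale t (for ε ∈ (0,1/10)), witnessed by maps f, g. Fix λ ∈ (0, 1/2]. If B(x, λt) ⊆ B(p, t), then (M,x,φ) and (N,f(x),ψ) are (ε/λ)-close at scale λt. -/

import Mathlib

open Metric

/-- The triples `(M,p,φ)` and `(N,q,ψ)` are `ε`-close at scale `t`, witnessed by the
`εt`-isometries `f` and `g`. -/
def CloseWith {M N : Type*} [MetricSpace M] [MetricSpace N] {k : ℕ}
    (ε t : ℝ) (p : M) (φ : M → EuclideanSpace ℝ (Fin k))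
    (q : N) (ψ : N → EuclideanSpace ℝ (Fin k)) (f : M → N) (g : N → M) : Prop :=
  (∀ x ∈ ball p (t / ε), ∀ y ∈ ball p (t / ε), |dist (f x) (f y) - dist x y| ≤ ε * t) ∧
  (∀ x ∈ ball q (t / ε), ∀ y ∈ ball q (t / ε), |dist (g x) (g y) - dist x y| ≤ ε * t) ∧
  dist (f p) q ≤ ε * t ∧ dist (g q) p ≤ ε * t ∧
  (∀ y ∈ ball q (t / (2 * ε)), dist (f (g y)) y ≤ ε * t) ∧
  (∀ x ∈ ball p (t / (2 * ε)), dist (g (f x)) x ≤ ε * t) ∧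
  (∀ y ∈ ball q (t / ε), dist (φ (g y)) (ψ y) ≤ ε * t) ∧
  (∀ x ∈ ball p (t / ε), dist (ψ (f x)) (φ x) ≤ ε * t)

/-- The triples `(M,p,φ)` and `(N,q,ψ)` are `ε`-close at scale `t`. -/
def Close {M N : Type*} [MetricSpace M] [MetricSpace N] {k : ℕ}
    (ε t : ℝ) (p : M) (φ : M → EuclideanSpace ℝ (Fin k))
    (q : N) (ψ : N → EuclideanSpace ℝ (Fin k)) : Prop :=
  ∃ f g, CloseWith ε t p φ q ψ f g

/-- Recentering closeness: if `(M,p,φ)` and `(N,q,ψ)` are `ε`-close at scale `t` via `f,g`,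
and `B(x,λt) ⊆ B(p,t)`, then `(M,x,φ)` and `(N,f x,ψ)` are `ε/λ`-close at scale `λt`. -/
theorem stmt8 {M N : Type*} [MetricSpace M] [MetricSpace N] {k : ℕ}
    (ε t lam : ℝ) (hε : 0 < ε) (hε' : ε < 1 / 10) (ht : 0 < t)
    (hlam : 0 < lam) (hlam' : lam ≤ 1 / 2)
    (p : M) (φ : M → EuclideanSpace ℝ (Fin k))
    (q : N) (ψ : N → EuclideanSpace ℝ (Fin k)) (f : M → N) (g : N → M)
    (hfg : CloseWith ε t p φ q ψ f g)
    (x : M) (hx : ball x (lam * t) ⊆ ball p t) :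
    Close (ε / lam) (lam * t) x φ (f x) ψ := by
  obtain ⟨hf, hg, hfp, hgq, hfg1, hgf1, hφ1, hψ1⟩ := hfg
  set r := t / ε with hrdef
  have hrpos : 0 < r := div_pos ht hε
  have htr : t = ε * r := by rw [hrdef]; field_simp
  have h2e : t / (2 * ε) = r / 2 := by rw [hrdef, div_div, mul_comm]
  rw [h2e] at hfg1 hgf1
  have hlam2 : lam * lam ≤ 1 / 4 := by nlinarith
  have hscale : lam * t / (ε / lam) = lam * lam * r := by
    rw [hrdef]; field_simp
  have hscale2 : lam * t / (2 * (ε / lam)) = lam * lam * r / 2 := by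
    rw [hrdef]; field_simp
  have het : ε / lam * (lam * t) = ε * t := by field_simp
  have hxp : dist x p < t := by
    have := hx (mem_ball_self (by positivity))
    rwa [mem_ball] at this
  have htltr : t < r := by nlinarith
  have hxball : x ∈ ball p r := by rw [mem_ball]; linarith
  have h1 := hf x hxball p (mem_ball_self hrpos)
  have hfxq : dist (f x) q ≤ t + 2 * (ε * t) := by
    have h2 : dist (f x) q ≤ dist (f x) (f p) + dist (f p) q := dist_triangle _ _ _
    have h3 : |dist (f x) (f p) - dist x p| ≤ ε * t := h1
    rw [abs_le] at h3
    linarith [h3.2]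
  have hinc1 : ball x (lam * lam * r) ⊆ ball p r := by
    intro y hy
    rw [mem_ball] at hy ⊢
    have := dist_triangle y x p
    nlinarith
  have hinc2 : ball (f x) (lam * lam * r) ⊆ ball q r := by
    intro y hy
    rw [mem_ball] at hy ⊢
    have := dist_triangle y (f x) q
    nlinarith
  have hinc3 : ball x (lam * lam * r / 2) ⊆ ball p (r / 2) := by
    intro y hy
    rw [mem_ball] at hy ⊢
    have := dist_triangle y x p
    nlinarith
  have hinc4 : ball (f x) (lam * lam * r / 2) ⊆ ball q (r / 2) := by
    intro y hy
    rw [mem_ball] at hy ⊢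
    have := dist_triangle y (f x) q
    nlinarith
  refine ⟨f, g, ?_⟩
  rw [CloseWith, hscale, hscale2, het]
  refine ⟨fun a ha b hb => hf a (hinc1 ha) b (hinc1 hb),
    fun a ha b hb => hg a (hinc2 ha) b (hinc2 hb),
    by simp [mul_pos hε ht |>.le],
    hgf1 x (by rw [mem_ball]; nlinarith),
    fun y hy => hfg1 y (hinc4 hy),
    fun a ha => hgf1 a (hinc3 ha),
    fun y hy => hφ1 y (hinc2 hy),
    fun a ha => hψ1 a (hinc1 ha)⟩
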